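/- For every face A∨ of the dual arrangement H∨, the big dual cone U(A∨) equals the union of the small dual cones V(B∨) over all faces B∨ of H∨ with A∨ ≤ B∨ (and this also equals the union of the U(B∨) over all B∨ with A∨ ≤ B∨). -/

import Mathlib

/-! Basic notions for a (central, essential) arrangement of hyperplanes `H`
in a finite-dimensional real vector space, its faces, flats, the dual
arrangement and its faces, and the big/small dual cones. -/

/-- Two points `x`, `y` lie in the same face of the hyperplane arrangement `H`:
for every hyperplane `W ∈ H` and every linear functional `f` with kernel `W`,
either `f x · f y > 0` or `f x = f y = 0`. -/
def SameFace {V : Type*} [AddCommGroup V] [Module ℝ V]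
    (H : Finset (Submodule ℝ V)) (x y : V) : Prop :=
  ∀ W ∈ H, ∀ f : V →ₗ[ℝ] ℝ, LinearMap.ker f = W →
    (0 < f x * f y ∨ (f x = 0 ∧ f y = 0))

/-- A face of the arrangement `H`: an equivalence class of the relation `SameFace`. -/
def IsFace {V : Type*} [AddCommGroup V] [Module ℝ V]
    (H : Finset (Submodule ℝ V)) (A : Set V) : Prop :=
  ∃ x : V, A = {y | SameFace H x y}

/-- A chamber is an open face. -/
def IsChamber {V : Type*} [AddCommGroup V] [Module ℝ V] [TopologicalSpace V]
    (H : Finset (Submodule ℝ V)) (A : Set V) : Prop :=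
  IsFace H A ∧ IsOpen A

/-- A flat of `H`: an intersection of a subfamily of the hyperplanes
(the empty subfamily gives all of `V`). -/
def IsFlat {V : Type*} [AddCommGroup V] [Module ℝ V]
    (H : Finset (Submodule ℝ V)) (L : Submodule ℝ V) : Prop :=
  ∃ J : Finset (Submodule ℝ V), J ⊆ H ∧ L = J.inf id

/-- Two (continuous) linear functionals `f`, `g` lie in the same face of the dual
arrangement `H∨`: for every 1-dimensional flat `l` of `H` and every `x ∈ l`,
either `f x · g x > 0` or `f x = g x = 0`. -/
def DualSameFace {V : Type*} [NormedAddCommGroup V] [NormedSpace ℝ V]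
    (H : Finset (Submodule ℝ V)) (f g : V →L[ℝ] ℝ) : Prop :=
  ∀ l : Submodule ℝ V, IsFlat H l → Module.finrank ℝ l = 1 →
    ∀ x ∈ l, (0 < f x * g x ∨ (f x = 0 ∧ g x = 0))

/-- A face of the dual arrangement `H∨` in the dual space. -/
def IsDualFace {V : Type*} [NormedAddCommGroup V] [NormedSpace ℝ V]
    (H : Finset (Submodule ℝ V)) (A : Set (V →L[ℝ] ℝ)) : Prop :=
  ∃ f : V →L[ℝ] ℝ, A = {g | DualSameFace H f g}

/-- A chamber of the dual arrangement: an open dual face. -/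
def IsDualChamber {V : Type*} [NormedAddCommGroup V] [NormedSpace ℝ V]
    (H : Finset (Submodule ℝ V)) (A : Set (V →L[ℝ] ℝ)) : Prop :=
  IsDualFace H A ∧ IsOpen A

/-- The big dual cone `U(A∨)` of a dual face `A∨`. -/
def bigCone {V : Type*} [NormedAddCommGroup V] [NormedSpace ℝ V]
    (A : Set (V →L[ℝ] ℝ)) : Set V :=
  {x | ∀ f ∈ A, 0 ≤ f x}

/-- The small dual cone `V(A∨)` of a dual face `A∨`: the intersection of the big
dual cones of all dual chambers `B∨` with `A∨ ≤ B∨`. -/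
def smallCone {V : Type*} [NormedAddCommGroup V] [NormedSpace ℝ V]
    (H : Finset (Submodule ℝ V)) (A : Set (V →L[ℝ] ℝ)) : Set V :=
  ⋂ B ∈ {B : Set (V →L[ℝ] ℝ) | IsDualChamber H B ∧ A ⊆ closure B}, bigCone B

/-! ### Auxiliary sign lemmas over `ℝ` -/

theorem signTrans {a b c : ℝ} (h1 : 0 < a * b) (h2 : 0 < b * c) : 0 < a * c := by
  nlinarith [mul_pos h1 h2, sq_nonneg b]

theorem signTrans' {a b c : ℝ} (h1 : 0 ≤ a * b) (h2 : 0 < b * c) : 0 ≤ a * c := by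
  have hb : b ≠ 0 := fun h => by simp [h] at h2
  nlinarith [mul_nonneg h1 h2.le, mul_self_pos.mpr hb]

theorem signPerturb {a b : ℝ} (h : |b| < |a|) : 0 < a * (a + b) := by
  rcases abs_cases a with ⟨ha, ha0⟩ | ⟨ha, ha0⟩
  · rw [ha] at h
    have hb := neg_abs_le b
    have : 0 < a + b := by linarith [abs_nonneg b]
    exact mul_pos (lt_of_le_of_lt (abs_nonneg b) h) this
  · rw [ha] at h
    have hb := le_abs_self b
    have h1 : a + b < 0 := by linarith
    exact mul_pos_of_neg_of_neg ha0 h1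

/-! ### Finitely generated sign-compatible cones -/

section Cones

variable {V : Type*} [NormedAddCommGroup V] [NormedSpace ℝ V]

/-- The cone of combinations of the `v i`, `i ∈ s`, whose coefficients are
sign-compatible with `f`. -/
def Kcone {ι : Type*} (s : Finset ι) (v : ι → V) (f : V →L[ℝ] ℝ) : Set V :=
  {y | ∃ a : ι → ℝ, (∀ i ∈ s, 0 ≤ a i * f (v i)) ∧ y = ∑ i ∈ s, a i • v i}

theorem Kcone_convex {ι : Type*} (s : Finset ι) (v : ι → V) (f : V →L[ℝ] ℝ) :
    Convex ℝ (Kcone s v f) := by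
  rintro y ⟨a, ha, rfl⟩ z ⟨b, hb, rfl⟩ p q hp hq hpq
  refine ⟨fun i => p * a i + q * b i, fun i hi => ?_, ?_⟩
  · show 0 ≤ (p * a i + q * b i) * f (v i)
    nlinarith [mul_nonneg hp (ha i hi), mul_nonneg hq (hb i hi)]
  · rw [Finset.smul_sum, Finset.smul_sum, ← Finset.sum_add_distrib]
    exact Finset.sum_congr rfl fun i _ => by rw [add_smul, smul_smul, smul_smul]

theorem Kcone_zero_mem {ι : Type*} (s : Finset ι) (v : ι → V) (f : V →L[ℝ] ℝ) :
    (0 : V) ∈ Kcone s v f :=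
  ⟨0, by simp, by simp⟩

theorem Kcone_smul_mem {ι : Type*} {s : Finset ι} {v : ι → V} {f : V →L[ℝ] ℝ}
    {c : ℝ} (hc : 0 ≤ c) {y : V} (hy : y ∈ Kcone s v f) : c • y ∈ Kcone s v f := by
  obtain ⟨a, ha, rfl⟩ := hy
  refine ⟨fun i => c * a i, fun i hi => ?_, ?_⟩
  · show 0 ≤ c * a i * f (v i)
    nlinarith [ha i hi]
  · rw [Finset.smul_sum]
    exact Finset.sum_congr rfl fun i _ => by simp [smul_smul]

theorem Kcone_erase_subset {ι : Type*} [DecidableEq ι] (s : Finset ι) (l : ι) (hl : l ∈ s)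
    (v : ι → V) (f : V →L[ℝ] ℝ) : Kcone (s.erase l) v f ⊆ Kcone s v f := by
  rintro y ⟨a, ha, rfl⟩
  refine ⟨fun i => if i = l then 0 else a i, fun i hi => ?_, ?_⟩
  · by_cases h : i = l
    · simp [h]
    · simpa [h] using ha i (Finset.mem_erase.mpr ⟨h, hi⟩)
  · conv_rhs => rw [← Finset.insert_erase hl, Finset.sum_insert (Finset.notMem_erase _ _)]
    beta_reduce
    rw [if_pos rfl, zero_smul, zero_add]
    exact Finset.sum_congr rfl fun i hi => by
      rw [if_neg (Finset.mem_erase.mp hi).1]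

theorem Kcone_subset_of_sign {ι : Type*} (s : Finset ι) (v : ι → V) {f g : V →L[ℝ] ℝ}
    (h : ∀ i ∈ s, 0 < f (v i) * g (v i)) : Kcone s v f ⊆ Kcone s v g := by
  rintro y ⟨a, ha, rfl⟩
  exact ⟨a, fun i hi => signTrans' (ha i hi) (h i hi), rfl⟩

end Cones

/-! ### The key covering lemma -/

section ClaimB

variable {V : Type*} [NormedAddCommGroup V] [NormedSpace ℝ V]

theorem claimB {ι : Type*} [Fintype ι] (v : ι → V) (f₀ : V →L[ℝ] ℝ) (x : V) :
    ∀ (n : ℕ) (s Z : Finset ι), (∀ i ∈ s, v i ≠ 0) →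
    (∀ i, i ∈ Z ↔ i ∈ s ∧ f₀ (v i) = 0) → Z.card ≤ n →
    x ∈ closure (Kcone s v f₀) →
    ∃ f₁ : V →L[ℝ] ℝ, (∀ i ∈ s, f₁ (v i) ≠ 0) ∧
      (∀ i ∈ s, f₀ (v i) ≠ 0 → 0 < f₀ (v i) * f₁ (v i)) ∧
      x ∈ closure (Kcone s v f₁) := by
  classical
  intro n
  induction n with
  | zero =>
    intro s Z hv hZ hcard hx
    have hZe : Z = ∅ := Finset.card_eq_zero.mp (Nat.le_zero.mp hcard)
    have hZ' : ∀ i ∈ s, f₀ (v i) ≠ 0 := by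
      intro i hi h0
      have : i ∈ Z := (hZ i).mpr ⟨hi, h0⟩
      simp [hZe] at this
    exact ⟨f₀, hZ', fun i hi h => mul_self_pos.mpr h, hx⟩
  | succ n IH =>
    intro s Z hv hZ hcard hx
    by_cases hZe : Z = ∅
    · have hZ' : ∀ i ∈ s, f₀ (v i) ≠ 0 := by
        intro i hi h0
        have : i ∈ Z := (hZ i).mpr ⟨hi, h0⟩
        simp [hZe] at this
      exact ⟨f₀, hZ', fun i hi h => mul_self_pos.mpr h, hx⟩
    -- sign vectors
    set ε : (ι → Bool) → ι → ℝ := fun τ i =>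
      if f₀ (v i) = 0 then (if τ i then 1 else -1) else (if 0 < f₀ (v i) then 1 else -1)
      with hεdef
    have hε1 : ∀ τ i, ε τ i * ε τ i = 1 := by
      intro τ i
      by_cases h : f₀ (v i) = 0 <;> by_cases h2 : τ i <;>
        by_cases h3 : 0 < f₀ (v i) <;> simp [hεdef, h, h2, h3]
    have hε2 : ∀ τ i, f₀ (v i) ≠ 0 → 0 < ε τ i * f₀ (v i) := by
      intro τ i h
      simp only [hεdef, if_neg h]
      rcases lt_or_gt_of_ne h with hlt | hgt
      · rw [if_neg (not_lt.mpr hlt.le)]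
        nlinarith
      · rw [if_pos hgt]
        nlinarith
    -- the cones with fully specified signs
    set K2 : (ι → Bool) → Set V := fun τ =>
      {y | ∃ b : ι → ℝ, (∀ i ∈ s, 0 ≤ b i) ∧ y = ∑ i ∈ s, b i • ε τ i • v i} with hK2def
    have hstep1 : Kcone s v f₀ ⊆ ⋃ τ : ι → Bool, K2 τ := by
      rintro y ⟨a, ha, rfl⟩
      set τa : ι → Bool := fun i => decide (0 ≤ a i) with hτa
      have hτa1 : ∀ i, f₀ (v i) = 0 → 0 ≤ a i → ε τa i = 1 := by
        intro i h0 hai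
        simp [hεdef, hτa, h0, hai]
      have hτa2 : ∀ i, f₀ (v i) = 0 → ¬0 ≤ a i → ε τa i = -1 := by
        intro i h0 hai
        simp [hεdef, hτa, h0, hai]
      refine Set.mem_iUnion.mpr ⟨τa, ⟨fun i => a i * ε τa i, fun i hi => ?_, ?_⟩⟩
      · show 0 ≤ a i * ε τa i
        by_cases h0 : f₀ (v i) = 0
        · by_cases hai : 0 ≤ a i
          · rw [hτa1 i h0 hai, mul_one]
            exact hai
          · rw [hτa2 i h0 hai, mul_neg_one]
            linarith [not_le.mp hai]
        · exact signTrans' (ha i hi) (by rw [mul_comm]; exact hε2 τa i h0)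
      · refine Finset.sum_congr rfl fun i hi => ?_
        show a i • v i = (a i * ε τa i) • ε τa i • v i
        rw [smul_smul, mul_assoc, hε1 τa i, mul_one]
    obtain ⟨τ, hxτ⟩ : ∃ τ, x ∈ closure (K2 τ) := by
      have := closure_minimal (hstep1.trans (Set.iUnion_mono fun τ => subset_closure))
        (isClosed_iUnion_of_finite fun τ => isClosed_closure) hx
      exact Set.mem_iUnion.mp this
    by_cases hreal : ∃ f : V →L[ℝ] ℝ, ∀ i ∈ s, 0 < ε τ i * f (v i)
    · obtain ⟨f, hf⟩ := hreal
      refine ⟨f, ?_, ?_, ?_⟩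
      · intro i hi h0
        have := hf i hi
        rw [h0, mul_zero] at this
        exact lt_irrefl _ this
      · intro i hi h0
        exact signTrans (by rw [mul_comm]; exact hε2 τ i h0) (hf i hi)
      · refine closure_mono ?_ hxτ
        rintro y ⟨b, hb, rfl⟩
        refine ⟨fun i => b i * ε τ i, fun i hi => ?_, ?_⟩
        · show 0 ≤ b i * ε τ i * f (v i)
          rw [mul_assoc]
          exact mul_nonneg (hb i hi) (hf i hi).le
        · refine Finset.sum_congr rfl fun i _ => ?_
          show b i • ε τ i • v i = (b i * ε τ i) • v i
          rw [smul_smul]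
    · -- Gordan's alternative via hyperplane separation
      set Φ : (ι → ℝ) → V := fun lam => ∑ i ∈ s, lam i • ε τ i • v i with hΦdef
      set D : Set (ι → ℝ) :=
        {lam | (∀ i, 0 ≤ lam i) ∧ (∀ i, i ∉ s → lam i = 0) ∧ ∑ i ∈ s, lam i = 1} with hDdef
      have hDclosed : IsClosed D := by
        have h1 : IsClosed {lam : ι → ℝ | ∀ i, 0 ≤ lam i} := by
          have he : {lam : ι → ℝ | ∀ i, 0 ≤ lam i} = ⋂ i, {lam : ι → ℝ | 0 ≤ lam i} := by
            ext; simp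
          rw [he]
          exact isClosed_iInter fun i => isClosed_le continuous_const (continuous_apply i)
        have h2 : IsClosed {lam : ι → ℝ | ∀ i, i ∉ s → lam i = 0} := by
          have he : {lam : ι → ℝ | ∀ i, i ∉ s → lam i = 0}
              = ⋂ i ∈ Finset.univ.filter (fun i => i ∉ s), {lam : ι → ℝ | lam i = 0} := by
            ext lam
            simp
          rw [he]
          exact isClosed_biInter fun i _ => isClosed_eq (continuous_apply i) continuous_const
        have h3 : IsClosed {lam : ι → ℝ | ∑ i ∈ s, lam i = 1} :=
          isClosed_eq (continuous_finset_sum s fun i _ => continuous_apply i) continuous_const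
        rw [hDdef, Set.setOf_and, Set.setOf_and]
        exact h1.inter (h2.inter h3)
      have hDsub : D ⊆ Metric.closedBall 0 1 := by
        intro lam hlam
        rw [Metric.mem_closedBall, dist_zero_right]
        refine (pi_norm_le_iff_of_nonneg zero_le_one).mpr fun i => ?_
        rw [Real.norm_eq_abs, abs_of_nonneg (hlam.1 i)]
        by_cases hi : i ∈ s
        · calc lam i ≤ ∑ j ∈ s, lam j := Finset.single_le_sum (fun j _ => hlam.1 j) hi
            _ = 1 := hlam.2.2
        · rw [hlam.2.1 i hi]
          exact zero_le_one
      have hDcomp : IsCompact D :=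
        (isCompact_closedBall (0 : ι → ℝ) 1).of_isClosed_subset hDclosed hDsub
      have hΦcont : Continuous Φ := by
        simp only [hΦdef]
        exact continuous_finset_sum s fun i _ => (continuous_apply i).smul continuous_const
      have hWcomp : IsCompact (Φ '' D) := hDcomp.image hΦcont
      have hWconv : Convex ℝ (Φ '' D) := by
        rintro _ ⟨lam1, h1, rfl⟩ _ ⟨lam2, h2, rfl⟩ p q hp hq hpq
        refine ⟨fun i => p * lam1 i + q * lam2 i, ⟨fun i => ?_, fun i hi => ?_, ?_⟩, ?_⟩
        · exact add_nonneg (mul_nonneg hp (h1.1 i)) (mul_nonneg hq (h2.1 i))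
        · show p * lam1 i + q * lam2 i = 0
          rw [h1.2.1 i hi, h2.2.1 i hi]
          ring
        · show ∑ i ∈ s, (p * lam1 i + q * lam2 i) = 1
          rw [Finset.sum_add_distrib, ← Finset.mul_sum, ← Finset.mul_sum, h1.2.2, h2.2.2]
          simpa using hpq
        · show Φ _ = p • Φ lam1 + q • Φ lam2
          simp only [hΦdef]
          rw [Finset.smul_sum, Finset.smul_sum, ← Finset.sum_add_distrib]
          refine Finset.sum_congr rfl fun i _ => ?_
          show (p * lam1 i + q * lam2 i) • ε τ i • v i
            = p • lam1 i • ε τ i • v i + q • lam2 i • ε τ i • v i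
          rw [add_smul, mul_smul, mul_smul]
      have h0W : (0 : V) ∈ Φ '' D := by
        by_contra h0W
        obtain ⟨g, u, hgu, hgW⟩ :=
          geometric_hahn_banach_point_closed hWconv hWcomp.isClosed h0W
        rw [map_zero] at hgu
        refine hreal ⟨g, fun i hi => ?_⟩
        have hmem : (fun j => if j = i then (1:ℝ) else 0) ∈ D := by
          refine ⟨fun j => ?_, fun j hj => ?_, ?_⟩
          · show (0:ℝ) ≤ if j = i then 1 else 0
            by_cases h : j = i <;> simp [h]
          · show (if j = i then (1:ℝ) else 0) = 0
            rw [if_neg]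
            rintro rfl
            exact hj hi
          · show (∑ j ∈ s, if j = i then (1:ℝ) else 0) = 1
            rw [Finset.sum_ite_eq' s i (fun _ => (1:ℝ)), if_pos hi]
        have hval : Φ (fun j => if j = i then (1:ℝ) else 0) = ε τ i • v i := by
          simp only [hΦdef]
          have hterm : ∀ j ∈ s, (if j = i then (1:ℝ) else 0) • ε τ j • v j
              = if j = i then ε τ j • v j else 0 := by
            intro j _
            by_cases h : j = i <;> simp [h]
          rw [Finset.sum_congr rfl hterm, Finset.sum_ite_eq' s i (fun j => ε τ j • v j),
            if_pos hi]
        have hkey := hgW (ε τ i • v i) ⟨_, hmem, hval⟩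
        have hgw : 0 < g (ε τ i • v i) := lt_trans hgu hkey
        rw [map_smul, smul_eq_mul] at hgw
        exact hgw
      obtain ⟨lam, hlamD, hΦlam⟩ := h0W
      simp only [hΦdef] at hΦlam
      -- the relation is supported on the zero set of `f₀`
      have hsupp : ∀ i ∈ s, f₀ (v i) ≠ 0 → lam i = 0 := by
        have hsum0 : ∑ i ∈ s, lam i * (ε τ i * f₀ (v i)) = 0 := by
          have hc := congrArg f₀ hΦlam
          rw [map_zero, map_sum] at hc
          rw [← hc]
          refine Finset.sum_congr rfl fun i _ => ?_
          rw [map_smul, map_smul, smul_eq_mul, smul_eq_mul]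
        have hnn : ∀ i ∈ s, 0 ≤ lam i * (ε τ i * f₀ (v i)) := by
          intro i hi
          by_cases h0 : f₀ (v i) = 0
          · rw [h0, mul_zero, mul_zero]
          · exact mul_nonneg (hlamD.1 i) (hε2 τ i h0).le
        intro i hi h0
        have hz := (Finset.sum_eq_zero_iff_of_nonneg hnn).mp hsum0 i hi
        have hpos := hε2 τ i h0
        by_contra hne
        have : 0 < lam i * (ε τ i * f₀ (v i)) :=
          mul_pos (lt_of_le_of_ne (hlamD.1 i) (Ne.symm hne)) hpos
        linarith
      have hex : ∃ i ∈ s, 0 < lam i := by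
        by_contra hno
        push_neg at hno
        have hle : ∑ i ∈ s, lam i ≤ 0 := Finset.sum_nonpos fun i hi => hno i hi
        rw [hlamD.2.2] at hle
        linarith
      obtain ⟨i₀, hi₀s, hi₀pos⟩ := hex
      set P := s.filter (fun i => 0 < lam i) with hPdef
      have hPne : P.Nonempty := ⟨i₀, Finset.mem_filter.mpr ⟨hi₀s, hi₀pos⟩⟩
      -- dropping one zero line
      have hstep4 : K2 τ ⊆ ⋃ l' ∈ P, {y : V | ∃ b : ι → ℝ,
          (∀ i ∈ s.erase l', 0 ≤ b i) ∧ y = ∑ i ∈ s.erase l', b i • ε τ i • v i} := by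
        rintro y ⟨b, hb, rfl⟩
        obtain ⟨l', hl'P, hmin⟩ := P.exists_min_image (fun i => b i / lam i) hPne
        have hl's : l' ∈ s := (Finset.mem_filter.mp hl'P).1
        have hlaml' : 0 < lam l' := (Finset.mem_filter.mp hl'P).2
        set μ := b l' / lam l' with hμdef
        have hμ0 : 0 ≤ μ := div_nonneg (hb l' hl's) hlaml'.le
        have hb' : ∀ i ∈ s, 0 ≤ b i - μ * lam i := by
          intro i hi
          by_cases hP : i ∈ P
          · have hlami : 0 < lam i := (Finset.mem_filter.mp hP).2
            have hmini := hmin i hP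
            rw [le_div_iff₀ hlami] at hmini
            linarith
          · have hlam0 : lam i = 0 := by
              by_contra hne
              exact hP (Finset.mem_filter.mpr ⟨hi, lt_of_le_of_ne (hlamD.1 i) (Ne.symm hne)⟩)
            rw [hlam0, mul_zero, sub_zero]
            exact hb i hi
        have hsum : ∑ i ∈ s, (b i - μ * lam i) • ε τ i • v i = ∑ i ∈ s, b i • ε τ i • v i := by
          have expand : ∀ i ∈ s, (b i - μ * lam i) • ε τ i • v i
              = b i • ε τ i • v i - μ • (lam i • ε τ i • v i) := by
            intro i _
            rw [sub_smul, mul_smul]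
          rw [Finset.sum_congr rfl expand, Finset.sum_sub_distrib, ← Finset.smul_sum,
            hΦlam, smul_zero, sub_zero]
        have hbl'0 : b l' - μ * lam l' = 0 := by
          rw [hμdef, div_mul_cancel₀ _ (ne_of_gt hlaml'), sub_self]
        refine Set.mem_biUnion hl'P ⟨fun i => b i - μ * lam i,
          fun i hi => hb' i (Finset.mem_of_mem_erase hi), ?_⟩
        have herase : ∑ i ∈ s.erase l', (b i - μ * lam i) • ε τ i • v i
            = ∑ i ∈ s, (b i - μ * lam i) • ε τ i • v i :=
          Finset.sum_erase s (by rw [hbl'0, zero_smul])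
        show ∑ i ∈ s, b i • ε τ i • v i
            = ∑ i ∈ s.erase l', (b i - μ * lam i) • ε τ i • v i
        rw [herase, hsum]
      obtain ⟨l', hl'P, hxd⟩ : ∃ l' ∈ P, x ∈ closure {y : V | ∃ b : ι → ℝ,
          (∀ i ∈ s.erase l', 0 ≤ b i) ∧ y = ∑ i ∈ s.erase l', b i • ε τ i • v i} := by
        have hclosed : IsClosed (⋃ l' ∈ P, closure {y : V | ∃ b : ι → ℝ,
            (∀ i ∈ s.erase l', 0 ≤ b i) ∧ y = ∑ i ∈ s.erase l', b i • ε τ i • v i}) :=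
          P.finite_toSet.isClosed_biUnion fun _ _ => isClosed_closure
        have hmem := closure_minimal
          (hstep4.trans (Set.iUnion₂_mono fun l' _ => subset_closure)) hclosed hxτ
        simpa using hmem
      have hl's : l' ∈ s := (Finset.mem_filter.mp hl'P).1
      have hf₀l' : f₀ (v l') = 0 := by
        by_contra h0
        have h1 := hsupp l' hl's h0
        have h2 := (Finset.mem_filter.mp hl'P).2
        linarith
      -- the dropped cone sits inside the smaller sign-compatible cone
      have hdropK : {y : V | ∃ b : ι → ℝ,
          (∀ i ∈ s.erase l', 0 ≤ b i) ∧ y = ∑ i ∈ s.erase l', b i • ε τ i • v i}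
          ⊆ Kcone (s.erase l') v f₀ := by
        rintro y ⟨b, hb, rfl⟩
        refine ⟨fun i => b i * ε τ i, fun i hi => ?_, ?_⟩
        · show 0 ≤ b i * ε τ i * f₀ (v i)
          by_cases h0 : f₀ (v i) = 0
          · rw [h0, mul_zero]
          · rw [mul_assoc]
            exact mul_nonneg (hb i hi) (hε2 τ i h0).le
        · refine Finset.sum_congr rfl fun i _ => ?_
          show b i • ε τ i • v i = (b i * ε τ i) • v i
          rw [smul_smul]
      have hcard' : (Z.erase l').card ≤ n := by
        have hl'Z : l' ∈ Z := (hZ l').mpr ⟨hl's, hf₀l'⟩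
        rw [Finset.card_erase_of_mem hl'Z]
        omega
      have hZ' : ∀ i, i ∈ Z.erase l' ↔ i ∈ s.erase l' ∧ f₀ (v i) = 0 := by
        intro i
        simp only [Finset.mem_erase, hZ i]
        tauto
      obtain ⟨f₁', hs1, hs2, hx1⟩ := IH (s.erase l') (Z.erase l')
        (fun i hi => hv i (Finset.mem_of_mem_erase hi)) hZ' hcard'
        (closure_mono hdropK hxd)
      by_cases hc : f₁' (v l') = 0
      · -- perturb to make the sign at `l'` nonzero
        obtain ⟨h, hh1, hh2⟩ := exists_dual_vector ℝ (v l') (norm_ne_zero_iff.mpr (hv l' hl's))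
        obtain ⟨δ, hδ0, hδ⟩ : ∃ δ : ℝ, 0 < δ ∧ ∀ i ∈ s.erase l', |δ * h (v i)| < |f₁' (v i)| := by
          rcases (s.erase l').eq_empty_or_nonempty with he | hne
          · exact ⟨1, one_pos, by simp [he]⟩
          · obtain ⟨j, hj, hjmin⟩ := (s.erase l').exists_min_image
              (fun i => |f₁' (v i)| / (|h (v i)| + 1)) hne
            have hpos : ∀ i ∈ s.erase l', 0 < |f₁' (v i)| / (|h (v i)| + 1) := fun i hi =>
              div_pos (abs_pos.mpr (hs1 i hi)) (by positivity)
            refine ⟨_, hpos j hj, fun i hi => ?_⟩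
            have h1 : |f₁' (v j)| / (|h (v j)| + 1) ≤ |f₁' (v i)| / (|h (v i)| + 1) := hjmin i hi
            have h2 : (0:ℝ) < |h (v i)| + 1 := by positivity
            rw [abs_mul, abs_of_nonneg (hpos j hj).le]
            calc (|f₁' (v j)| / (|h (v j)| + 1)) * |h (v i)|
                < (|f₁' (v j)| / (|h (v j)| + 1)) * (|h (v i)| + 1) :=
                  mul_lt_mul_of_pos_left (lt_add_one _) (hpos j hj)
              _ ≤ (|f₁' (v i)| / (|h (v i)| + 1)) * (|h (v i)| + 1) :=
                  mul_le_mul_of_nonneg_right h1 h2.le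
              _ = |f₁' (v i)| := div_mul_cancel₀ _ (ne_of_gt h2)
        set f₁ : V →L[ℝ] ℝ := f₁' + δ • h with hf₁def
        have heval : ∀ z : V, f₁ z = f₁' z + δ * h z := by
          intro z
          simp [hf₁def]
        have hl'pos : 0 < f₁ (v l') := by
          rw [heval, hc, hh2, zero_add]
          exact mul_pos hδ0 (norm_pos_iff.mpr (hv l' hl's))
        have hpres : ∀ i ∈ s.erase l', 0 < f₁' (v i) * f₁ (v i) := by
          intro i hi
          rw [heval]
          exact signPerturb (hδ i hi)
        refine ⟨f₁, fun i hi => ?_, fun i hi h0 => ?_, ?_⟩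
        · rcases eq_or_ne i l' with rfl | hne
          · exact ne_of_gt hl'pos
          · intro hzero
            have hp := hpres i (Finset.mem_erase.mpr ⟨hne, hi⟩)
            rw [hzero, mul_zero] at hp
            exact lt_irrefl _ hp
        · rcases eq_or_ne i l' with rfl | hne
          · exact absurd hf₀l' h0
          · have hie : i ∈ s.erase l' := Finset.mem_erase.mpr ⟨hne, hi⟩
            exact signTrans (hs2 i hie h0) (hpres i hie)
        · refine closure_mono ?_ hx1
          exact (Kcone_subset_of_sign _ _ fun i hi => hpres i hi).trans
            (Kcone_erase_subset s l' hl's v f₁)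
      · refine ⟨f₁', fun i hi => ?_, fun i hi h0 => ?_, ?_⟩
        · rcases eq_or_ne i l' with rfl | hne
          · exact hc
          · exact hs1 i (Finset.mem_erase.mpr ⟨hne, hi⟩)
        · rcases eq_or_ne i l' with rfl | hne
          · exact absurd hf₀l' h0
          · exact hs2 i (Finset.mem_erase.mpr ⟨hne, hi⟩) h0
        · exact closure_mono (Kcone_erase_subset s l' hl's v f₁') hx1

end ClaimB

/-! ### Faces of the dual arrangement via generators of the lines -/

section Faces

variable {V : Type*} [NormedAddCommGroup V] [NormedSpace ℝ V]
variable (H : Finset (Submodule ℝ V)) {ι : Type*} (v : ι → V)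

theorem dsf_refl (f : V →L[ℝ] ℝ) : DualSameFace H f f := by
  intro l _ _ x _
  rcases eq_or_ne (f x) 0 with h | h
  · exact Or.inr ⟨h, h⟩
  · exact Or.inl (mul_self_pos.mpr h)

/-- The generator characterization hypothesis for `DualSameFace`. -/
def GenChar : Prop :=
  ∀ f g : V →L[ℝ] ℝ, DualSameFace H f g ↔
    ∀ i : ι, 0 < f (v i) * g (v i) ∨ (f (v i) = 0 ∧ g (v i) = 0)

theorem dsf_symm (hiff : GenChar H v) {f g : V →L[ℝ] ℝ} (hfg : DualSameFace H f g) :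
    DualSameFace H g f := by
  rw [hiff] at hfg ⊢
  intro i
  rcases hfg i with h | ⟨h1, h2⟩
  · exact Or.inl (by rwa [mul_comm] at h)
  · exact Or.inr ⟨h2, h1⟩

theorem dsf_trans (hiff : GenChar H v) {f g k : V →L[ℝ] ℝ} (hfg : DualSameFace H f g)
    (hgk : DualSameFace H g k) : DualSameFace H f k := by
  rw [hiff] at hfg hgk ⊢
  intro i
  rcases hfg i with h1 | ⟨h1, h2⟩
  · rcases hgk i with h3 | ⟨h3, h4⟩
    · exact Or.inl (signTrans h1 h3)
    · rw [h3, mul_zero] at h1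
      exact absurd h1 (lt_irrefl 0)
  · rcases hgk i with h3 | ⟨h3, h4⟩
    · rw [h2, zero_mul] at h3
      exact absurd h3 (lt_irrefl 0)
    · exact Or.inr ⟨h1, h4⟩

theorem face_eq (hiff : GenChar H v) {f g : V →L[ℝ] ℝ} (hfg : DualSameFace H f g) :
    {h | DualSameFace H g h} = {h | DualSameFace H f h} := by
  ext k
  exact ⟨fun hk => dsf_trans H v hiff hfg hk,
    fun hk => dsf_trans H v hiff (dsf_symm H v hiff hfg) hk⟩

theorem face_isOpen [Finite ι] (hiff : GenChar H v) {f : V →L[ℝ] ℝ}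
    (hf : ∀ i, f (v i) ≠ 0) : IsOpen {g | DualSameFace H f g} := by
  have he : {g | DualSameFace H f g} = ⋂ i, {g : V →L[ℝ] ℝ | 0 < f (v i) * g (v i)} := by
    ext g
    simp only [Set.mem_setOf_eq, Set.mem_iInter]
    rw [hiff f g]
    constructor
    · intro hg i
      rcases hg i with h | ⟨h0, _⟩
      · exact h
      · exact absurd h0 (hf i)
    · intro hg i
      exact Or.inl (hg i)
  rw [he]
  exact isOpen_iInter_of_finite fun i =>
    isOpen_lt continuous_const
      (continuous_const.mul (ContinuousLinearMap.apply ℝ ℝ (v i)).continuous)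

theorem mem_closure_face (hiff : GenChar H v) {f g : V →L[ℝ] ℝ}
    (hfg : ∀ i, 0 ≤ f (v i) * g (v i) ∧ (f (v i) = 0 → g (v i) = 0)) :
    g ∈ closure {h | DualSameFace H f h} := by
  have hmem : ∀ t ∈ Set.Ioi (0:ℝ), g + t • f ∈ {h | DualSameFace H f h} := by
    intro t ht
    rw [Set.mem_setOf_eq, hiff]
    intro i
    by_cases h0 : f (v i) = 0
    · refine Or.inr ⟨h0, ?_⟩
      simp [(hfg i).2 h0, h0]
    · left
      have hev : (g + t • f) (v i) = g (v i) + t * f (v i) := by simp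
      rw [hev]
      have h1 := (hfg i).1
      have ht' : (0:ℝ) < t := ht
      nlinarith [mul_self_pos.mpr h0]
  have htend : Filter.Tendsto (fun t : ℝ => g + t • f)
      (nhdsWithin 0 (Set.Ioi 0)) (nhds g) := by
    have hcont : Continuous fun t : ℝ => g + t • f :=
      continuous_const.add (continuous_id.smul continuous_const)
    have := (hcont.tendsto 0).mono_left (nhdsWithin_le_nhds (s := Set.Ioi (0:ℝ)))
    simpa using this
  exact mem_closure_of_tendsto htend (eventually_mem_nhdsWithin.mono hmem)

theorem closure_face_subset (hiff : GenChar H v) {f : V →L[ℝ] ℝ} :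
    closure {g | DualSameFace H f g} ⊆
      {g : V →L[ℝ] ℝ | ∀ i, 0 ≤ f (v i) * g (v i) ∧ (f (v i) = 0 → g (v i) = 0)} := by
  refine closure_minimal ?_ ?_
  · intro g hg i
    rcases (hiff f g).mp hg i with h | ⟨h1, h2⟩
    · refine ⟨h.le, fun h0 => ?_⟩
      rw [h0, zero_mul] at h
      exact absurd h (lt_irrefl 0)
    · exact ⟨by rw [h1, zero_mul], fun _ => h2⟩
  · have he : {g : V →L[ℝ] ℝ | ∀ i, 0 ≤ f (v i) * g (v i) ∧ (f (v i) = 0 → g (v i) = 0)}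
        = ⋂ i, ({g : V →L[ℝ] ℝ | 0 ≤ f (v i) * g (v i)} ∩
            {g : V →L[ℝ] ℝ | f (v i) = 0 → g (v i) = 0}) := by
      ext g
      simp only [Set.mem_iInter, Set.mem_inter_iff, Set.mem_setOf_eq]
    rw [he]
    refine isClosed_iInter fun i => IsClosed.inter ?_ ?_
    · exact isClosed_le continuous_const
        (continuous_const.mul (ContinuousLinearMap.apply ℝ ℝ (v i)).continuous)
    · by_cases h0 : f (v i) = 0
      · have : {g : V →L[ℝ] ℝ | f (v i) = 0 → g (v i) = 0}
            = {g : V →L[ℝ] ℝ | g (v i) = 0} := by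
          ext g
          simp [h0]
        rw [this]
        exact isClosed_eq (ContinuousLinearMap.apply ℝ ℝ (v i)).continuous continuous_const
      · have : {g : V →L[ℝ] ℝ | f (v i) = 0 → g (v i) = 0} = Set.univ := by
          ext g
          simp [h0]
        rw [this]
        exact isClosed_univ

theorem bigCone_mono {A B : Set (V →L[ℝ] ℝ)} (hAB : A ⊆ closure B) :
    bigCone B ⊆ bigCone A := by
  intro x hx f hf
  have hcl : closure B ⊆ {f : V →L[ℝ] ℝ | 0 ≤ f x} :=
    closure_minimal (fun g hg => hx g hg)
      (isClosed_le continuous_const (ContinuousLinearMap.apply ℝ ℝ x).continuous)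
  exact hcl (hAB hf)

theorem farkasEasy [Fintype ι] (hiff : GenChar H v) {f₁ : V →L[ℝ] ℝ} {x : V}
    (hx : x ∈ closure (Kcone Finset.univ v f₁)) :
    x ∈ bigCone {g | DualSameFace H f₁ g} := by
  intro g hg
  have hK : Kcone Finset.univ v f₁ ⊆ {y : V | 0 ≤ g y} := by
    rintro y ⟨a, ha, rfl⟩
    show 0 ≤ g (∑ i, a i • v i)
    rw [map_sum]
    refine Finset.sum_nonneg fun i _ => ?_
    rw [map_smul, smul_eq_mul]
    rcases (hiff f₁ g).mp hg i with h | ⟨h1, h2⟩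
    · exact signTrans' (ha i (Finset.mem_univ i)) h
    · rw [h2, mul_zero]
  exact closure_minimal hK (isClosed_le continuous_const g.continuous) hx

theorem farkasHard [Fintype ι] (hiff : GenChar H v) {f₀ : V →L[ℝ] ℝ} {x : V}
    (hx : x ∈ bigCone {g | DualSameFace H f₀ g}) :
    x ∈ closure (Kcone Finset.univ v f₀) := by
  classical
  by_contra hxK
  obtain ⟨g, u, hgu, hgK⟩ := geometric_hahn_banach_point_closed
    ((Kcone_convex Finset.univ v f₀).closure) isClosed_closure hxK
  have hu0 : u < 0 := by
    have := hgK 0 (subset_closure (Kcone_zero_mem _ _ _))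
    rwa [map_zero] at this
  have hgnn : ∀ y ∈ Kcone Finset.univ v f₀, 0 ≤ g y := by
    intro y hy
    by_contra hneg
    push_neg at hneg
    have hyc : ((u - 1) / g y) • y ∈ Kcone Finset.univ v f₀ :=
      Kcone_smul_mem (le_of_lt (div_pos_of_neg_of_neg (by linarith) hneg)) hy
    have := hgK _ (subset_closure hyc)
    rw [map_smul, smul_eq_mul, div_mul_cancel₀ _ (ne_of_lt hneg)] at this
    linarith
  have hsingle : ∀ (i : ι) (c : ℝ), 0 ≤ c * f₀ (v i) → c • v i ∈ Kcone Finset.univ v f₀ := by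
    intro i c hc
    refine ⟨fun j => if j = i then c else 0, fun j _ => ?_, ?_⟩
    · show 0 ≤ (if j = i then c else 0) * f₀ (v j)
      by_cases h : j = i
      · rw [if_pos h, h]
        exact hc
      · rw [if_neg h, zero_mul]
    · have hterm : ∀ j ∈ Finset.univ, (if j = i then c else 0) • v j
          = if j = i then c • v i else 0 := by
        intro j _
        by_cases h : j = i <;> simp [h]
      rw [Finset.sum_congr rfl hterm, Finset.sum_ite_eq' Finset.univ i (fun _ => c • v i),
        if_pos (Finset.mem_univ i)]
  have hgprop : ∀ i, 0 ≤ f₀ (v i) * g (v i) ∧ (f₀ (v i) = 0 → g (v i) = 0) := by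
    intro i
    constructor
    · have := hgnn _ (hsingle i (f₀ (v i)) (mul_self_nonneg _))
      rwa [map_smul, smul_eq_mul] at this
    · intro h0
      have h1 := hgnn _ (hsingle i 1 (by rw [h0, mul_zero]))
      have h2 := hgnn _ (hsingle i (-1) (by rw [h0, mul_zero]))
      rw [map_smul, smul_eq_mul, one_mul] at h1
      rw [map_smul, smul_eq_mul, neg_one_mul] at h2
      linarith
  have hgcl : g ∈ closure {h | DualSameFace H f₀ h} := mem_closure_face H v hiff hgprop
  have hgx : 0 ≤ g x := by
    have hcl : closure {h | DualSameFace H f₀ h} ⊆ {f : V →L[ℝ] ℝ | 0 ≤ f x} :=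
      closure_minimal (fun h hh => hx h hh)
        (isClosed_le continuous_const (ContinuousLinearMap.apply ℝ ℝ x).continuous)
    exact hcl hgcl
  linarith

theorem starLemma [Fintype ι] (hiff : GenChar H v) (hv : ∀ i, v i ≠ 0)
    (f₀ : V →L[ℝ] ℝ) (x : V) (hx : x ∈ bigCone {g | DualSameFace H f₀ g}) :
    ∃ f₁ : V →L[ℝ] ℝ, (∀ i, f₁ (v i) ≠ 0) ∧
      {g | DualSameFace H f₀ g} ⊆ closure {g | DualSameFace H f₁ g} ∧
      x ∈ bigCone {g | DualSameFace H f₁ g} := by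
  classical
  have hxK := farkasHard H v hiff hx
  obtain ⟨f₁, h1, h2, h3⟩ := claimB v f₀ x
    (Finset.univ.filter fun i => f₀ (v i) = 0).card Finset.univ
    (Finset.univ.filter fun i => f₀ (v i) = 0)
    (fun i _ => hv i) (fun i => by simp) le_rfl hxK
  refine ⟨f₁, fun i => h1 i (Finset.mem_univ i), ?_, ?_⟩
  · intro g hg
    refine mem_closure_face H v hiff fun i => ?_
    refine ⟨?_, fun h0 => absurd h0 (h1 i (Finset.mem_univ i))⟩
    rcases (hiff f₀ g).mp hg i with h | ⟨ha, hb⟩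
    · have hne : f₀ (v i) ≠ 0 := by
        intro h0
        rw [h0, zero_mul] at h
        exact absurd h (lt_irrefl 0)
      have hcompat := h2 i (Finset.mem_univ i) hne
      exact (signTrans (by rwa [mul_comm] at hcompat) h).le
    · rw [hb, mul_zero]
  · exact farkasEasy H v hiff h3

end Faces

/-- For every face `A∨` of the dual arrangement,
`U(A∨) = ⋃_{B∨ ≥ A∨} V(B∨) = ⋃_{B∨ ≥ A∨} U(B∨)`. -/
theorem statement4 {V : Type*} [NormedAddCommGroup V] [NormedSpace ℝ V]
    [FiniteDimensional ℝ V] (H : Finset (Submodule ℝ V))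
    (hHyp : ∀ W ∈ H, ∃ f : V →ₗ[ℝ] ℝ, f ≠ 0 ∧ LinearMap.ker f = W)
    (hEss : (⋂ W ∈ H, (W : Set V)) = {0})
    (A : Set (V →L[ℝ] ℝ)) (hA : IsDualFace H A) :
    bigCone A =
      (⋃ B ∈ {B : Set (V →L[ℝ] ℝ) | IsDualFace H B ∧ A ⊆ closure B}, smallCone H B) ∧
    bigCone A =
      (⋃ B ∈ {B : Set (V →L[ℝ] ℝ) | IsDualFace H B ∧ A ⊆ closure B}, bigCone B) := by
  classical
  obtain ⟨f₀, rfl⟩ := hA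
  -- the 1-dimensional flats and their generators
  set L : Set (Submodule ℝ V) := {l | IsFlat H l ∧ Module.finrank ℝ l = 1} with hLdef
  have hLfin : L.Finite := by
    have hsub : L ⊆ ↑(H.powerset.image fun J => J.inf id) := by
      rintro l ⟨⟨J, hJ, rfl⟩, -⟩
      simp only [Finset.coe_image, Set.mem_image, Finset.mem_coe, Finset.mem_powerset]
      exact ⟨J, hJ, rfl⟩
    exact Set.Finite.subset (Finset.finite_toSet _) hsub
  haveI : Fintype L := hLfin.fintype
  have hvex : ∀ l : L, ∃ z : V, z ∈ (l : Submodule ℝ V) ∧ z ≠ 0 := by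
    rintro ⟨l, hl⟩
    have hne : l ≠ ⊥ := by
      intro hbot
      have h1 := hl.2
      rw [hbot] at h1
      rw [finrank_bot] at h1
      exact absurd h1 (by norm_num)
    obtain ⟨z, hz, hz0⟩ := Submodule.exists_mem_ne_zero_of_ne_bot hne
    exact ⟨z, hz, hz0⟩
  choose v hvmem hvne using hvex
  have hspan : ∀ (l : L) (x : V), x ∈ (l : Submodule ℝ V) → ∃ c : ℝ, x = c • v l := by
    intro l x hx
    have h1 : (ℝ ∙ v l) ≤ (l : Submodule ℝ V) := by
      rw [Submodule.span_singleton_le_iff_mem]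
      exact hvmem l
    have h2 : (ℝ ∙ v l) = (l : Submodule ℝ V) := by
      refine Submodule.eq_of_le_of_finrank_eq h1 ?_
      rw [finrank_span_singleton (hvne l), l.2.2]
    rw [← h2] at hx
    obtain ⟨c, hc⟩ := Submodule.mem_span_singleton.mp hx
    exact ⟨c, hc.symm⟩
  have hiff : GenChar H v := by
    intro f g
    constructor
    · intro hfg i
      exact hfg i i.2.1 i.2.2 (v i) (hvmem i)
    · intro hfg l hflat hrank z hz
      have hlL : l ∈ L := ⟨hflat, hrank⟩
      obtain ⟨c, rfl⟩ := hspan ⟨l, hlL⟩ z hz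
      rcases eq_or_ne c 0 with rfl | hc
      · right
        simp
      · rcases hfg ⟨l, hlL⟩ with h | ⟨h1, h2⟩
        · left
          have hcalc : f (c • v ⟨l, hlL⟩) * g (c • v ⟨l, hlL⟩)
              = (c * c) * (f (v ⟨l, hlL⟩) * g (v ⟨l, hlL⟩)) := by
            rw [map_smul, map_smul, smul_eq_mul, smul_eq_mul]
            ring
          rw [hcalc]
          exact mul_pos (mul_self_pos.mpr hc) h
        · right
          constructor
          · rw [map_smul, smul_eq_mul, h1, mul_zero]
          · rw [map_smul, smul_eq_mul, h2, mul_zero]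
  -- uniqueness of chambers above a chamber
  have chamberEq : ∀ (f₁ : V →L[ℝ] ℝ), (∀ i, f₁ (v i) ≠ 0) →
      ∀ C' : Set (V →L[ℝ] ℝ), IsDualChamber H C' →
        {g | DualSameFace H f₁ g} ⊆ closure C' → C' = {g | DualSameFace H f₁ g} := by
    rintro f₁ hf₁ C' ⟨⟨g', rfl⟩, -⟩ hsub
    have hf₁cl : f₁ ∈ closure {g | DualSameFace H g' g} := hsub (dsf_refl H f₁)
    have hprop := closure_face_subset H v hiff hf₁cl
    have hsame : DualSameFace H g' f₁ := by
      rw [hiff]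
      intro i
      left
      have h1 := (hprop i).1
      have hg'ne : g' (v i) ≠ 0 := fun h0 => hf₁ i ((hprop i).2 h0)
      exact lt_of_le_of_ne h1 (Ne.symm (mul_ne_zero hg'ne (hf₁ i)))
    exact (face_eq H v hiff hsame).symm
  constructor
  · ext x
    constructor
    · intro hx
      obtain ⟨f₁, hf₁, hsub, hxb⟩ := starLemma H v hiff hvne f₀ x hx
      refine Set.mem_biUnion (show {g | DualSameFace H f₁ g} ∈
        {B : Set (V →L[ℝ] ℝ) | IsDualFace H B ∧
          {g | DualSameFace H f₀ g} ⊆ closure B} from ⟨⟨f₁, rfl⟩, hsub⟩) ?_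
      refine Set.mem_iInter₂.mpr fun C' hC' => ?_
      rw [chamberEq f₁ hf₁ C' hC'.1 hC'.2]
      exact hxb
    · intro hx
      obtain ⟨B, hB, hxB⟩ := Set.mem_iUnion₂.mp hx
      obtain ⟨⟨fB, rfl⟩, hAB⟩ := hB
      obtain ⟨f₁, hf₁, hsub, -⟩ := starLemma H v hiff hvne fB 0
        (by intro f _; rw [map_zero])
      have hcham : IsDualChamber H {g | DualSameFace H f₁ g} :=
        ⟨⟨f₁, rfl⟩, face_isOpen H v hiff hf₁⟩
      have hxC : x ∈ bigCone {g | DualSameFace H f₁ g} :=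
        Set.mem_iInter₂.mp hxB {g | DualSameFace H f₁ g} ⟨hcham, hsub⟩
      exact bigCone_mono hAB (bigCone_mono hsub hxC)
  · ext x
    constructor
    · intro hx
      exact Set.mem_biUnion (show {g | DualSameFace H f₀ g} ∈
        {B : Set (V →L[ℝ] ℝ) | IsDualFace H B ∧
          {g | DualSameFace H f₀ g} ⊆ closure B} from ⟨⟨f₀, rfl⟩, subset_closure⟩) hx
    · intro hx
      obtain ⟨B, hB, hxB⟩ := Set.mem_iUnion₂.mp hx
      exact bigCone_mono hB.2 hxB
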